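/- Let $0 \leq X \leq Y$ be nonnegative random variables and suppose there are constants $a,b > 1$ such that $\lambda^{-1}\int_{\{Y > \lambda\}} X\, d\mathbb{P} \leq b\, \mathbb{P}(Y \geq \lambda)$ for all $\lambda > a$. If $\mathbb{E}[Y] < \infty$, then $\mathbb{E}[X \log^+ X] < \infty$; in fact $\mathbb{E}[X\log^+ X] \leq \log(a)\,\mathbb{E}[X] + b\,\mathbb{E}[Y]$. -/

import Mathlib

open MeasureTheory
open scoped ENNReal

-- helper: ∫⁻ l in Ioc 1 c, ofReal l⁻¹ = ofReal (log c), for 1 ≤ c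
lemma lintegral_inv_Ioc {c : ℝ} (h1 : 1 ≤ c) :
    ∫⁻ l in Set.Ioc 1 c, ENNReal.ofReal l⁻¹ = ENNReal.ofReal (Real.log c) := by
  have hne : ∀ x ∈ Set.uIcc (1:ℝ) c, x ≠ 0 := by
    intro x hx
    rw [Set.uIcc_of_le h1] at hx
    exact ne_of_gt (lt_of_lt_of_le one_pos hx.1)
  have hii : IntervalIntegrable (fun x : ℝ => x⁻¹) volume 1 c :=
    intervalIntegral.intervalIntegrable_inv hne continuousOn_id
  have hint : IntegrableOn (fun l : ℝ => l⁻¹) (Set.Ioc 1 c) volume := by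
    have := hii.1
    simpa using this
  have hnn : 0 ≤ᵐ[volume.restrict (Set.Ioc 1 c)] fun l : ℝ => l⁻¹ := by
    filter_upwards [ae_restrict_mem measurableSet_Ioc] with l hl
    exact inv_nonneg.mpr (le_of_lt (lt_of_lt_of_le one_pos hl.1.le))
  rw [← ofReal_integral_eq_lintegral_ofReal hint hnn]
  congr 1
  have : ∫ l in Set.Ioc 1 c, l⁻¹ = ∫ l in (1:ℝ)..c, l⁻¹ :=
    (intervalIntegral.integral_of_le h1).symm
  rw [this, integral_inv (by intro hx; exact (hne 0 hx) rfl), div_one]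

-- pointwise: ∫⁻ l in Ioi 1, (if l < c then ofReal c * ofReal l⁻¹ else 0) = ofReal (c * log⁺ c)
lemma pointwise_llogl {c : ℝ} (hc : 0 ≤ c) :
    ∫⁻ l in Set.Ioi (1:ℝ), (if l < c then ENNReal.ofReal c * ENNReal.ofReal l⁻¹ else 0) =
      ENNReal.ofReal (c * max (Real.log c) 0) := by
  have heq : ∀ l : ℝ, (if l < c then ENNReal.ofReal c * ENNReal.ofReal l⁻¹ else 0) =
      (Set.Iio c).indicator (fun l => ENNReal.ofReal c * ENNReal.ofReal l⁻¹) l := by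
    intro l; simp [Set.indicator_apply, Set.mem_Iio]
  simp_rw [heq]
  rw [lintegral_indicator measurableSet_Iio _, Measure.restrict_restrict measurableSet_Iio]
  have hIoo : Set.Iio c ∩ Set.Ioi (1:ℝ) = Set.Ioo 1 c := by
    ext x; simp [Set.mem_Ioo, and_comm]
  rw [hIoo]
  by_cases h1 : c ≤ 1
  · have : Set.Ioo (1:ℝ) c = ∅ := Set.Ioo_eq_empty (by intro h; exact absurd h1 (not_le.mpr h))
    rw [this]
    simp [max_eq_right (Real.log_nonpos hc h1)]
  · push_neg at h1
    have hcongr : volume.restrict (Set.Ioo (1:ℝ) c) = volume.restrict (Set.Ioc 1 c) :=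
      Measure.restrict_congr_set MeasureTheory.Ioo_ae_eq_Ioc
    rw [hcongr, lintegral_const_mul' _ _ ENNReal.ofReal_ne_top, lintegral_inv_Ioc h1.le,
      ← ENNReal.ofReal_mul hc, max_eq_left (Real.log_nonneg h1.le)]

theorem converse_LlogL {Ω : Type*} [MeasurableSpace Ω] (μ : Measure Ω)
    [IsProbabilityMeasure μ]
    (X Y : Ω → ℝ) (hX : Measurable X) (hY : Measurable Y)
    (hX0 : ∀ ω, 0 ≤ X ω) (hXY : ∀ ω, X ω ≤ Y ω)
    (a b : ℝ) (ha : 1 < a) (hb : 1 < b)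
    (h : ∀ l : ℝ, a < l →
      (ENNReal.ofReal l)⁻¹ * ∫⁻ ω in {ω | l < Y ω}, ENNReal.ofReal (X ω) ∂μ ≤
        ENNReal.ofReal b * μ {ω | l ≤ Y ω})
    (hYfin : ∫⁻ ω, ENNReal.ofReal (Y ω) ∂μ < ⊤) :
    (∫⁻ ω, ENNReal.ofReal (X ω * max (Real.log (X ω)) 0) ∂μ < ⊤) ∧
    ∫⁻ ω, ENNReal.ofReal (X ω * max (Real.log (X ω)) 0) ∂μ ≤
      ENNReal.ofReal (Real.log a) * ∫⁻ ω, ENNReal.ofReal (X ω) ∂μ +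
        ENNReal.ofReal b * ∫⁻ ω, ENNReal.ofReal (Y ω) ∂μ := by
  set f : ℝ → Ω → ℝ≥0∞ := fun l ω =>
    if l < X ω then ENNReal.ofReal (X ω) * ENNReal.ofReal l⁻¹ else 0 with hf
  have hfm : Measurable (Function.uncurry f) := by
    apply Measurable.ite
    · exact measurableSet_lt measurable_fst (hX.comp measurable_snd)
    · exact ((hX.comp measurable_snd).ennreal_ofReal).mul
        (measurable_fst.inv.ennreal_ofReal)
    · exact measurable_const
  -- Step 1: rewrite the LHS by Tonelli
  have key : ∫⁻ ω, ENNReal.ofReal (X ω * max (Real.log (X ω)) 0) ∂μ =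
      ∫⁻ l in Set.Ioi (1:ℝ), ∫⁻ ω, f l ω ∂μ := by
    have h1 : ∀ ω, ENNReal.ofReal (X ω * max (Real.log (X ω)) 0) =
        ∫⁻ l in Set.Ioi (1:ℝ), f l ω := fun ω => (pointwise_llogl (hX0 ω)).symm
    simp_rw [h1]
    exact (lintegral_lintegral_swap hfm.aemeasurable).symm
  -- inner integral
  have hinner : ∀ l : ℝ, 0 < l → ∫⁻ ω, f l ω ∂μ =
      (ENNReal.ofReal l)⁻¹ * ∫⁻ ω in {ω | l < X ω}, ENNReal.ofReal (X ω) ∂μ := by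
    intro l hl
    have : ∀ ω, f l ω =
        Set.indicator {ω | l < X ω} (fun ω => ENNReal.ofReal (X ω) * ENNReal.ofReal l⁻¹) ω := by
      intro ω; simp [hf, Set.indicator_apply, Set.mem_setOf_eq]
    simp_rw [this]
    rw [lintegral_indicator (measurableSet_lt measurable_const hX) _,
      lintegral_mul_const' _ _ ENNReal.ofReal_ne_top,
      ENNReal.ofReal_inv_of_pos hl, mul_comm]
  rw [key]
  -- split the domain
  have hsplit : (Set.Ioi (1:ℝ)) = Set.Ioc 1 a ∪ Set.Ioi a := (Set.Ioc_union_Ioi_eq_Ioi ha.le).symm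
  rw [hsplit, lintegral_union measurableSet_Ioi (Set.Ioc_disjoint_Ioi le_rfl)]
  have hXfin : ∫⁻ ω, ENNReal.ofReal (X ω) ∂μ < ⊤ :=
    lt_of_le_of_lt (lintegral_mono fun ω => ENNReal.ofReal_le_ofReal (hXY ω)) hYfin
  -- bound on Ioc 1 a
  have bound1 : ∫⁻ l in Set.Ioc 1 a, ∫⁻ ω, f l ω ∂μ ≤
      ENNReal.ofReal (Real.log a) * ∫⁻ ω, ENNReal.ofReal (X ω) ∂μ := by
    have step : ∫⁻ l in Set.Ioc 1 a, ∫⁻ ω, f l ω ∂μ ≤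
        ∫⁻ l in Set.Ioc 1 a, ENNReal.ofReal l⁻¹ * ∫⁻ ω, ENNReal.ofReal (X ω) ∂μ := by
      apply lintegral_mono_ae
      filter_upwards [ae_restrict_mem measurableSet_Ioc] with l hl
      have hlpos : (0:ℝ) < l := lt_trans one_pos hl.1
      rw [hinner l hlpos, ← ENNReal.ofReal_inv_of_pos hlpos]
      gcongr
      exact Measure.restrict_le_self
    refine step.trans ?_
    rw [show (fun l : ℝ => ENNReal.ofReal l⁻¹ * ∫⁻ ω, ENNReal.ofReal (X ω) ∂μ) =
        (fun l : ℝ => ENNReal.ofReal l⁻¹ * ∫⁻ ω, ENNReal.ofReal (X ω) ∂μ) from rfl,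
      lintegral_mul_const' _ _ hXfin.ne, lintegral_inv_Ioc ha.le, mul_comm]
  -- bound on Ioi a
  have bound2 : ∫⁻ l in Set.Ioi a, ∫⁻ ω, f l ω ∂μ ≤
      ENNReal.ofReal b * ∫⁻ ω, ENNReal.ofReal (Y ω) ∂μ := by
    have step : ∫⁻ l in Set.Ioi a, ∫⁻ ω, f l ω ∂μ ≤
        ∫⁻ l in Set.Ioi a, ENNReal.ofReal b * μ {ω | l ≤ Y ω} := by
      apply lintegral_mono_ae
      filter_upwards [ae_restrict_mem measurableSet_Ioi] with l hl
      have hlpos : (0:ℝ) < l := lt_trans (lt_trans one_pos ha) hl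
      rw [hinner l hlpos]
      refine le_trans ?_ (h l hl)
      gcongr
      exact hXY _
    refine step.trans ?_
    rw [lintegral_const_mul' _ _ ENNReal.ofReal_ne_top]
    gcongr
    calc ∫⁻ l in Set.Ioi a, μ {ω | l ≤ Y ω} ≤ ∫⁻ l in Set.Ioi 0, μ {ω | l ≤ Y ω} :=
          lintegral_mono_set (Set.Ioi_subset_Ioi (le_of_lt (lt_trans one_pos ha)))
      _ = ∫⁻ ω, ENNReal.ofReal (Y ω) ∂μ := by
          rw [lintegral_eq_lintegral_meas_le μ
            (Filter.Eventually.of_forall fun ω => le_trans (hX0 ω) (hXY ω)) hY.aemeasurable]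
  constructor
  · refine lt_of_le_of_lt (add_le_add bound1 bound2) ?_
    exact ENNReal.add_lt_top.mpr ⟨ENNReal.mul_lt_top ENNReal.ofReal_lt_top hXfin,
      ENNReal.mul_lt_top ENNReal.ofReal_lt_top hYfin⟩
  · exact add_le_add bound1 bound2
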